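/- Let a ≥ 0, let p = (2+a)/2, and let ε ∈ (0, (2+a)/2). There exists a constant c = c(a,ε) such that for all y₁, y₂ on the unit circle ∂D₀, ∫_{D₀} (1 − |x|)^a · |P₀(x,y₁) − P₀(x,y₂)|^p dx ≤ c·|y₁ − y₂|^{(2+a)/2 − ε}. -/

import Mathlib

open MeasureTheory

/-- The Poisson kernel of the unit disc, viewed in `ℂ ≃ ℝ²`. -/
noncomputable def poissonKernelUnitDisc (x y : ℂ) : ℝ :=
  (1 / (2 * Real.pi)) * (1 - ‖x‖ ^ 2) / ‖y - x‖ ^ 2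

lemma integrableOn_norm_rpow_ball2 {s : ℝ} (hs2 : -2 < s) (hs0 : s < 0) :
    IntegrableOn (fun x : ℂ => ‖x‖ ^ s) (Metric.ball (0 : ℂ) 2) := by
  have hmeas : Measurable (fun x : ℂ => ‖x‖ ^ s) := by fun_prop
  have hnn : ∀ x : ℂ, 0 ≤ ‖x‖ ^ s := fun x => Real.rpow_nonneg (norm_nonneg x) s
  constructor
  · exact hmeas.aestronglyMeasurable
  · rw [HasFiniteIntegral, lintegral_enorm_of_nonneg hnn,
      lintegral_eq_lintegral_meas_le _ (Filter.Eventually.of_forall hnn) hmeas.aemeasurable]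
    set μ := volume.restrict (Metric.ball (0 : ℂ) 2) with hμ
    have hint2 : IntegrableOn (fun t : ℝ => Real.pi * t ^ (2 * s⁻¹)) (Set.Ioi (1 : ℝ)) := by
      have h2s : 2 * s⁻¹ < -1 := by
        nlinarith [inv_mul_cancel₀ (ne_of_lt hs0), inv_lt_zero.mpr hs0]
      exact (integrableOn_Ioi_rpow_of_lt h2s one_pos).const_mul _
    have hbound : ∀ t : ℝ, t ∈ Set.Ioi (1 : ℝ) →
        μ {a | t ≤ ‖a‖ ^ s} ≤ ENNReal.ofReal (Real.pi * t ^ (2 * s⁻¹)) := by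
      intro t ht
      have ht0 : (0:ℝ) < t := lt_trans one_pos ht
      have hsub : {a : ℂ | t ≤ ‖a‖ ^ s} ⊆ Metric.closedBall (0 : ℂ) (t ^ s⁻¹) := by
        intro a hat
        simp only [Set.mem_setOf_eq] at hat
        have ha0 : 0 < ‖a‖ := by
          rcases eq_or_lt_of_le (norm_nonneg a) with h | h
          · exfalso
            rw [← h, Real.zero_rpow (ne_of_lt hs0)] at hat
            linarith
          · exact h
        rw [Metric.mem_closedBall, dist_zero_right]
        exact (Real.le_rpow_inv_iff_of_neg ha0 ht0 hs0).2 hat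
      calc μ {a | t ≤ ‖a‖ ^ s}
          ≤ volume (Metric.closedBall (0 : ℂ) (t ^ s⁻¹)) :=
            (Measure.restrict_apply_le _ _).trans (measure_mono hsub)
        _ = ENNReal.ofReal (t ^ s⁻¹) ^ 2 * NNReal.pi := Complex.volume_closedBall _ _
        _ = ENNReal.ofReal (Real.pi * t ^ (2 * s⁻¹)) := by
            rw [← ENNReal.ofReal_pow (Real.rpow_nonneg ht0.le _),
              ENNReal.ofReal_mul Real.pi_nonneg]
            rw [← Real.rpow_natCast (t ^ s⁻¹) 2, ← Real.rpow_mul ht0.le]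
            have hpi : (NNReal.pi : ENNReal) = ENNReal.ofReal Real.pi := by
              rw [ENNReal.ofReal]
              norm_cast
              ext
              simp [Real.coe_toNNReal _ Real.pi_nonneg]
            rw [hpi, mul_comm]
            push_cast
            rw [mul_comm s⁻¹ 2]
    calc ∫⁻ t in Set.Ioi (0 : ℝ), μ {a | t ≤ ‖a‖ ^ s}
        ≤ ∫⁻ t in Set.Ioc (0 : ℝ) 1 ∪ Set.Ioi 1, μ {a | t ≤ ‖a‖ ^ s} :=
          lintegral_mono_set Set.Ioi_subset_Ioc_union_Ioi
      _ ≤ (∫⁻ t in Set.Ioc (0 : ℝ) 1, μ {a | t ≤ ‖a‖ ^ s})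
            + ∫⁻ t in Set.Ioi (1 : ℝ), μ {a | t ≤ ‖a‖ ^ s} := lintegral_union_le _ _ _
      _ < ⊤ := by
          refine ENNReal.add_lt_top.2 ⟨?_, ?_⟩
          · calc ∫⁻ t in Set.Ioc (0 : ℝ) 1, μ {a | t ≤ ‖a‖ ^ s}
                ≤ ∫⁻ _ in Set.Ioc (0 : ℝ) 1, volume (Metric.ball (0 : ℂ) 2) :=
                  lintegral_mono fun t =>
                    (measure_mono (Set.subset_univ _)).trans_eq (Measure.restrict_apply_univ _)
              _ = volume (Metric.ball (0 : ℂ) 2) * volume (Set.Ioc (0 : ℝ) 1) :=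
                  setLIntegral_const _ _
              _ < ⊤ := ENNReal.mul_lt_top measure_ball_lt_top (by simp)
          · calc ∫⁻ t in Set.Ioi (1 : ℝ), μ {a | t ≤ ‖a‖ ^ s}
                ≤ ∫⁻ t in Set.Ioi (1 : ℝ), ENNReal.ofReal (Real.pi * t ^ (2 * s⁻¹)) :=
                  setLIntegral_mono' measurableSet_Ioi hbound
              _ < ⊤ := hint2.setLIntegral_lt_top

private lemma arith_main {s' d δ r₁ r₂ m : ℝ} (hm0 : 0 < m) (hm1 : m ≤ r₁) (hm2 : m ≤ r₂)
    (hs0 : 0 ≤ s') (hs2 : s' ≤ 2 * m) (hd0 : 0 ≤ d) (hd : d ≤ δ) :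
    s' * (d * (r₂ + r₁)) * m ^ 2 ≤ 4 * δ * (r₁ ^ 2 * r₂ ^ 2) := by
  have hr₁ : 0 < r₁ := lt_of_lt_of_le hm0 hm1
  have hr₂ : 0 < r₂ := lt_of_lt_of_le hm0 hm2
  have hδ0 : 0 ≤ δ := le_trans hd0 hd
  have A : m * m ≤ r₂ * r₂ := mul_le_mul hm2 hm2 hm0.le hr₂.le
  have A' : m * m ≤ r₁ * r₁ := mul_le_mul hm1 hm1 hm0.le hr₁.le
  have k1 : m ^ 3 * r₁ ≤ r₁ ^ 2 * r₂ ^ 2 := by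
    calc m ^ 3 * r₁ = (m * m) * (m * r₁) := by ring
      _ ≤ (r₂ * r₂) * (r₁ * r₁) :=
          mul_le_mul A (mul_le_mul_of_nonneg_right hm1 hr₁.le)
            (mul_nonneg hm0.le hr₁.le) (mul_nonneg hr₂.le hr₂.le)
      _ = r₁ ^ 2 * r₂ ^ 2 := by ring
  have k2 : m ^ 3 * r₂ ≤ r₁ ^ 2 * r₂ ^ 2 := by
    calc m ^ 3 * r₂ = (m * m) * (m * r₂) := by ring
      _ ≤ (r₁ * r₁) * (r₂ * r₂) :=
          mul_le_mul A' (mul_le_mul_of_nonneg_right hm2 hr₂.le)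
            (mul_nonneg hm0.le hr₂.le) (mul_nonneg hr₁.le hr₁.le)
      _ = r₁ ^ 2 * r₂ ^ 2 := by ring
  have C : s' * d ≤ 2 * m * δ := mul_le_mul hs2 hd hd0 (by linarith)
  have E : m ^ 3 * r₂ + m ^ 3 * r₁ ≤ 2 * (r₁ ^ 2 * r₂ ^ 2) := by linarith
  calc s' * (d * (r₂ + r₁)) * m ^ 2 = s' * d * ((r₂ + r₁) * m ^ 2) := by ring
    _ ≤ 2 * m * δ * ((r₂ + r₁) * m ^ 2) := by
        refine mul_le_mul_of_nonneg_right C ?_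
        have : 0 ≤ r₂ + r₁ := by linarith
        positivity
    _ = 2 * δ * (m ^ 3 * r₂ + m ^ 3 * r₁) := by ring
    _ ≤ 2 * δ * (2 * (r₁ ^ 2 * r₂ ^ 2)) := by
        refine mul_le_mul_of_nonneg_left E (by linarith)
    _ = 4 * δ * (r₁ ^ 2 * r₂ ^ 2) := by ring

private lemma arith_p {s' m r : ℝ} (hm0 : 0 < m) (hm : m ≤ r) (hs2 : s' ≤ 2 * m) :
    s' * m / 2 ≤ r ^ 2 := by nlinarith

lemma poisson_pointwise (a p ε : ℝ) (ha : 0 ≤ a) (hpa : p = (2 + a) / 2) (hε : 0 < ε)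
    (hε1 : ε < 1) (y₁ y₂ x : ℂ) (hy₁ : ‖y₁‖ = 1) (hy₂ : ‖y₂‖ = 1) (hx : ‖x‖ < 1) :
    (1 - ‖x‖) ^ a * |poissonKernelUnitDisc x y₁ - poissonKernelUnitDisc x y₂| ^ p ≤
      (2 / Real.pi) ^ p * ‖y₁ - y₂‖ ^ (p - ε) *
        (‖y₁ - x‖ ^ (ε - 2) + ‖y₂ - x‖ ^ (ε - 2)) := by
  have hπ : 0 < Real.pi := Real.pi_pos
  have hp1 : 1 ≤ p := by rw [hpa]; linarith
  have hεp : ε < p := lt_of_lt_of_le hε1 hp1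
  set r₁ := ‖y₁ - x‖ with hr₁def
  set r₂ := ‖y₂ - x‖ with hr₂def
  set δ := ‖y₁ - y₂‖ with hδdef
  set ρ := 1 - ‖x‖ with hρdef
  have hρ : 0 < ρ := by rw [hρdef]; linarith
  have hρ1 : ρ ≤ r₁ := by
    rw [hρdef, ← hy₁]; exact norm_sub_norm_le _ _
  have hρ2 : ρ ≤ r₂ := by
    rw [hρdef, ← hy₂]; exact norm_sub_norm_le _ _
  have hr₁ : 0 < r₁ := lt_of_lt_of_le hρ hρ1
  have hr₂ : 0 < r₂ := lt_of_lt_of_le hρ hρ2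
  set m := min r₁ r₂ with hm
  have hm0 : 0 < m := lt_min hr₁ hr₂
  have hρm : ρ ≤ m := le_min hρ1 hρ2
  have hm1 : m ≤ r₁ := min_le_left _ _
  have hm2 : m ≤ r₂ := min_le_right _ _
  clear_value m
  have hδd : |r₂ - r₁| ≤ δ := by
    have h := abs_norm_sub_norm_le (y₂ - x) (y₁ - x)
    rw [hδdef, norm_sub_rev]
    simpa using h
  have hδ0 : 0 ≤ δ := norm_nonneg _
  have hs : 0 < 1 - ‖x‖ ^ 2 := by nlinarith [norm_nonneg x]
  have hs2 : 1 - ‖x‖ ^ 2 ≤ 2 * m := by nlinarith [norm_nonneg x]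
  have hP1 : poissonKernelUnitDisc x y₁ = 1 / (2 * Real.pi) * (1 - ‖x‖ ^ 2) / r₁ ^ 2 := rfl
  have hP2 : poissonKernelUnitDisc x y₂ = 1 / (2 * Real.pi) * (1 - ‖x‖ ^ 2) / r₂ ^ 2 := rfl
  have hP1p : 0 ≤ poissonKernelUnitDisc x y₁ := by rw [hP1]; positivity
  have hP2p : 0 ≤ poissonKernelUnitDisc x y₂ := by rw [hP2]; positivity
  set D := poissonKernelUnitDisc x y₁ - poissonKernelUnitDisc x y₂ with hD
  clear_value D
  have hr₁2 : (0:ℝ) < r₁ ^ 2 := by positivity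
  have hr₂2 : (0:ℝ) < r₂ ^ 2 := by positivity
  have hm2pos : (0:ℝ) < m ^ 2 := by positivity
  -- bound 1
  have hb1 : |D| ≤ 2 / Real.pi * (δ / m ^ 2) := by
    have e : D = 1 / (2 * Real.pi) *
        ((1 - ‖x‖ ^ 2) * ((r₂ - r₁) * (r₂ + r₁)) / (r₁ ^ 2 * r₂ ^ 2)) := by
      rw [hD, hP1, hP2]
      field_simp
      ring
    have habs : |D| = 1 / (2 * Real.pi) *
        ((1 - ‖x‖ ^ 2) * (|r₂ - r₁| * (r₂ + r₁)) / (r₁ ^ 2 * r₂ ^ 2)) := by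
      rw [e, abs_mul, abs_of_nonneg (by positivity : (0:ℝ) ≤ 1 / (2 * Real.pi)),
        abs_div, abs_mul, abs_mul, abs_of_nonneg hs.le,
        abs_of_nonneg (by linarith : (0:ℝ) ≤ r₂ + r₁),
        abs_of_nonneg (by positivity : (0:ℝ) ≤ r₁ ^ 2 * r₂ ^ 2)]
    rw [habs]
    have key : (1 - ‖x‖ ^ 2) * (|r₂ - r₁| * (r₂ + r₁)) / (r₁ ^ 2 * r₂ ^ 2)
        ≤ 4 * δ / m ^ 2 := by
      rw [div_le_div_iff₀ (by positivity) hm2pos]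
      exact arith_main hm0 hm1 hm2 hs.le hs2 (abs_nonneg _) hδd
    calc 1 / (2 * Real.pi) * ((1 - ‖x‖ ^ 2) * (|r₂ - r₁| * (r₂ + r₁)) / (r₁ ^ 2 * r₂ ^ 2))
        ≤ 1 / (2 * Real.pi) * (4 * δ / m ^ 2) :=
          mul_le_mul_of_nonneg_left key (by positivity)
      _ = 2 / Real.pi * (δ / m ^ 2) := by
          field_simp
          ring
  -- bound 2
  have hb2 : |D| ≤ 2 / Real.pi * (1 / m) := by
    have e1 : poissonKernelUnitDisc x y₁ ≤ 1 / Real.pi * (1 / m) := by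
      rw [hP1, div_le_iff₀ hr₁2]
      have h' : 1 / Real.pi * (1 / m) * r₁ ^ 2 = r₁ ^ 2 / (Real.pi * m) := by
        field_simp
      rw [h', le_div_iff₀ (by positivity)]
      have expand : 1 / (2 * Real.pi) * (1 - ‖x‖ ^ 2) * (Real.pi * m)
          = (1 - ‖x‖ ^ 2) * m / 2 := by field_simp
      rw [expand]
      exact arith_p hm0 hm1 hs2
    have e2 : poissonKernelUnitDisc x y₂ ≤ 1 / Real.pi * (1 / m) := by
      rw [hP2, div_le_iff₀ hr₂2]
      have h' : 1 / Real.pi * (1 / m) * r₂ ^ 2 = r₂ ^ 2 / (Real.pi * m) := by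
        field_simp
      rw [h', le_div_iff₀ (by positivity)]
      have expand : 1 / (2 * Real.pi) * (1 - ‖x‖ ^ 2) * (Real.pi * m)
          = (1 - ‖x‖ ^ 2) * m / 2 := by field_simp
      rw [expand]
      exact arith_p hm0 hm2 hs2
    have habs2 : |D| ≤ poissonKernelUnitDisc x y₁ + poissonKernelUnitDisc x y₂ := by
      rw [hD, abs_sub_le_iff]
      constructor <;> linarith
    calc |D| ≤ poissonKernelUnitDisc x y₁ + poissonKernelUnitDisc x y₂ := habs2
      _ ≤ 1 / Real.pi * (1 / m) + 1 / Real.pi * (1 / m) := add_le_add e1 e2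
      _ = 2 / Real.pi * (1 / m) := by ring
  -- rpow chain
  have hc2 : (0:ℝ) < 2 / Real.pi := by positivity
  have hsplit : |D| ^ p = |D| ^ ε * |D| ^ (p - ε) := by
    have h := Real.rpow_add' (abs_nonneg D) (show ε + (p - ε) ≠ 0 by
      rw [show ε + (p - ε) = p by ring]; linarith)
    rwa [show ε + (p - ε) = p by ring] at h
  have t1 : |D| ^ ε ≤ (2 / Real.pi * (1 / m)) ^ ε :=
    Real.rpow_le_rpow (abs_nonneg _) hb2 hε.le
  have t2 : |D| ^ (p - ε) ≤ (2 / Real.pi * (δ / m ^ 2)) ^ (p - ε) :=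
    Real.rpow_le_rpow (abs_nonneg _) hb1 (by linarith)
  have tρ : ρ ^ a ≤ m ^ a := Real.rpow_le_rpow hρ.le hρm ha
  have step1 : ρ ^ a * |D| ^ p ≤
      m ^ a * ((2 / Real.pi * (1 / m)) ^ ε * (2 / Real.pi * (δ / m ^ 2)) ^ (p - ε)) := by
    rw [hsplit]
    have hb2' : (0:ℝ) ≤ 2 / Real.pi * (1 / m) := by positivity
    have h1 : |D| ^ ε * |D| ^ (p - ε) ≤
        (2 / Real.pi * (1 / m)) ^ ε * (2 / Real.pi * (δ / m ^ 2)) ^ (p - ε) :=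
      mul_le_mul t1 t2 (Real.rpow_nonneg (abs_nonneg _) _) (Real.rpow_nonneg hb2' _)
    exact mul_le_mul tρ h1
      (mul_nonneg (Real.rpow_nonneg (abs_nonneg _) _) (Real.rpow_nonneg (abs_nonneg _) _))
      (Real.rpow_nonneg hm0.le _)
  have e₁ : (2 / Real.pi * (1 / m)) ^ ε = (2 / Real.pi) ^ ε * m ^ (-ε) := by
    rw [Real.mul_rpow hc2.le (by positivity : (0:ℝ) ≤ 1 / m), one_div,
      Real.inv_rpow hm0.le, ← Real.rpow_neg hm0.le]
  have e₂ : (2 / Real.pi * (δ / m ^ 2)) ^ (p - ε)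
      = (2 / Real.pi) ^ (p - ε) * (δ ^ (p - ε) / m ^ (2 * (p - ε))) := by
    rw [Real.mul_rpow hc2.le (div_nonneg hδ0 hm2pos.le),
      Real.div_rpow hδ0 hm2pos.le, ← Real.rpow_natCast m 2, ← Real.rpow_mul hm0.le]
    norm_num
  have hcc : (2 / Real.pi) ^ ε * (2 / Real.pi) ^ (p - ε) = (2 / Real.pi) ^ p := by
    rw [← Real.rpow_add hc2]
    norm_num
  have hmm : m ^ a * m ^ (-ε) / m ^ (2 * (p - ε)) = m ^ (ε - 2) := by
    rw [← Real.rpow_add hm0, ← Real.rpow_sub hm0]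
    congr 1
    rw [hpa]; ring
  have iden : m ^ a * ((2 / Real.pi * (1 / m)) ^ ε * (2 / Real.pi * (δ / m ^ 2)) ^ (p - ε))
      = (2 / Real.pi) ^ p * δ ^ (p - ε) * m ^ (ε - 2) := by
    rw [e₁, e₂, ← hcc, ← hmm]
    ring
  have tm : m ^ (ε - 2) ≤ r₁ ^ (ε - 2) + r₂ ^ (ε - 2) := by
    rcases le_total r₁ r₂ with h | h
    · rw [hm, min_eq_left h]
      have : 0 ≤ r₂ ^ (ε - 2) := Real.rpow_nonneg hr₂.le _
      linarith
    · rw [hm, min_eq_right h]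
      have : 0 ≤ r₁ ^ (ε - 2) := Real.rpow_nonneg hr₁.le _
      linarith
  calc ρ ^ a * |D| ^ p
      ≤ m ^ a * ((2 / Real.pi * (1 / m)) ^ ε * (2 / Real.pi * (δ / m ^ 2)) ^ (p - ε)) := step1
    _ = (2 / Real.pi) ^ p * δ ^ (p - ε) * m ^ (ε - 2) := iden
    _ ≤ (2 / Real.pi) ^ p * δ ^ (p - ε) * (r₁ ^ (ε - 2) + r₂ ^ (ε - 2)) :=
        mul_le_mul_of_nonneg_left tm
          (mul_nonneg (Real.rpow_nonneg hc2.le _) (Real.rpow_nonneg hδ0 _))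

lemma key_int (y : ℂ) (hy : ‖y‖ = 1) {s : ℝ} (hs2 : -2 < s) (hs0 : s < 0) :
    IntegrableOn (fun x : ℂ => ‖y - x‖ ^ s) (Metric.ball (0 : ℂ) 1) ∧
    ∫ x in Metric.ball (0 : ℂ) 1, ‖y - x‖ ^ s ≤ ∫ x in Metric.ball (0 : ℂ) 2, ‖x‖ ^ s := by
  have hmp : MeasurePreserving (fun x : ℂ => y - x) volume volume :=
    Measure.measurePreserving_sub_left volume y
  have hemb : MeasurableEmbedding (fun x : ℂ => y - x) :=
    (MeasurableEquiv.subLeft y).measurableEmbedding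
  have hint := (hmp.integrableOn_comp_preimage hemb).2 (integrableOn_norm_rpow_ball2 hs2 hs0)
  have hsub : Metric.ball (0 : ℂ) 1 ⊆ (fun x : ℂ => y - x) ⁻¹' Metric.ball (0 : ℂ) 2 := by
    intro x hx
    simp only [Set.mem_preimage, Metric.mem_ball, dist_zero_right] at *
    calc ‖y - x‖ ≤ ‖y‖ + ‖x‖ := norm_sub_le _ _
      _ < 2 := by rw [hy]; linarith
  refine ⟨hint.mono_set hsub, ?_⟩
  calc ∫ x in Metric.ball (0 : ℂ) 1, ‖y - x‖ ^ s
      ≤ ∫ x in (fun x : ℂ => y - x) ⁻¹' Metric.ball (0 : ℂ) 2, ‖y - x‖ ^ s :=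
        setIntegral_mono_set hint
          (Filter.Eventually.of_forall fun x => Real.rpow_nonneg (norm_nonneg _) _)
          (HasSubset.Subset.eventuallyLE hsub)
    _ = ∫ z in Metric.ball (0 : ℂ) 2, ‖z‖ ^ s := hmp.setIntegral_preimage_emb hemb (fun z => ‖z‖ ^ s) (Metric.ball 0 2)

lemma main_aux (a p ε : ℝ) (ha : 0 ≤ a) (hpa : p = (2 + a) / 2) (hε : 0 < ε) (hε1 : ε < 1) :
    ∃ c : ℝ, 0 < c ∧ ∀ y₁ y₂ : ℂ, ‖y₁‖ = 1 → ‖y₂‖ = 1 →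
      ∫ x in Metric.ball (0 : ℂ) 1,
          (1 - ‖x‖) ^ a * |poissonKernelUnitDisc x y₁ - poissonKernelUnitDisc x y₂| ^ p
        ≤ c * ‖y₁ - y₂‖ ^ (p - ε) := by
  have hs2 : (-2 : ℝ) < ε - 2 := by linarith
  have hs0 : ε - 2 < 0 := by linarith
  set K := ∫ x in Metric.ball (0 : ℂ) 2, ‖x‖ ^ (ε - 2) with hK
  have hK0 : 0 ≤ K := integral_nonneg fun x => Real.rpow_nonneg (norm_nonneg x) _
  refine ⟨(2 / Real.pi) ^ p * (2 * K) + 1, ?_, ?_⟩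
  · have h1 : 0 ≤ (2 / Real.pi) ^ p * (2 * K) :=
      mul_nonneg (Real.rpow_nonneg (by positivity) _) (by linarith)
    linarith
  intro y₁ y₂ hy₁ hy₂
  obtain ⟨hint1, hle1⟩ := key_int y₁ hy₁ hs2 hs0
  obtain ⟨hint2, hle2⟩ := key_int y₂ hy₂ hs2 hs0
  set δ := ‖y₁ - y₂‖ with hδ
  set C := (2 / Real.pi) ^ p * δ ^ (p - ε) with hC
  have hC0 : 0 ≤ C :=
    mul_nonneg (Real.rpow_nonneg (by positivity) _) (Real.rpow_nonneg (norm_nonneg _) _)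
  have hGint : IntegrableOn
      (fun x => C * (‖y₁ - x‖ ^ (ε - 2) + ‖y₂ - x‖ ^ (ε - 2))) (Metric.ball (0 : ℂ) 1) :=
    (hint1.add hint2).const_mul C
  have hmono : ∫ x in Metric.ball (0 : ℂ) 1,
      (1 - ‖x‖) ^ a * |poissonKernelUnitDisc x y₁ - poissonKernelUnitDisc x y₂| ^ p
      ≤ ∫ x in Metric.ball (0 : ℂ) 1, C * (‖y₁ - x‖ ^ (ε - 2) + ‖y₂ - x‖ ^ (ε - 2)) := by
    refine integral_mono_of_nonneg ?_ hGint ?_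
    · filter_upwards [ae_restrict_mem measurableSet_ball] with x hx
      have hx' : ‖x‖ < 1 := by simpa [mem_ball_zero_iff] using hx
      have h1 : (0:ℝ) ≤ 1 - ‖x‖ := by linarith
      exact mul_nonneg (Real.rpow_nonneg h1 _) (Real.rpow_nonneg (abs_nonneg _) _)
    · filter_upwards [ae_restrict_mem measurableSet_ball] with x hx
      have hx' : ‖x‖ < 1 := by simpa [mem_ball_zero_iff] using hx
      have h := poisson_pointwise a p ε ha hpa hε hε1 y₁ y₂ x hy₁ hy₂ hx'
      calc (1 - ‖x‖) ^ a * |poissonKernelUnitDisc x y₁ - poissonKernelUnitDisc x y₂| ^ p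
          ≤ (2 / Real.pi) ^ p * δ ^ (p - ε) * (‖y₁ - x‖ ^ (ε - 2) + ‖y₂ - x‖ ^ (ε - 2)) := h
        _ = C * (‖y₁ - x‖ ^ (ε - 2) + ‖y₂ - x‖ ^ (ε - 2)) := by rw [hC]
  have hcalc : ∫ x in Metric.ball (0 : ℂ) 1, C * (‖y₁ - x‖ ^ (ε - 2) + ‖y₂ - x‖ ^ (ε - 2))
      = C * ((∫ x in Metric.ball (0 : ℂ) 1, ‖y₁ - x‖ ^ (ε - 2))
          + ∫ x in Metric.ball (0 : ℂ) 1, ‖y₂ - x‖ ^ (ε - 2)) := by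
    rw [integral_const_mul, integral_add hint1 hint2]
  calc ∫ x in Metric.ball (0 : ℂ) 1,
      (1 - ‖x‖) ^ a * |poissonKernelUnitDisc x y₁ - poissonKernelUnitDisc x y₂| ^ p
      ≤ ∫ x in Metric.ball (0 : ℂ) 1, C * (‖y₁ - x‖ ^ (ε - 2) + ‖y₂ - x‖ ^ (ε - 2)) := hmono
    _ = C * ((∫ x in Metric.ball (0 : ℂ) 1, ‖y₁ - x‖ ^ (ε - 2))
          + ∫ x in Metric.ball (0 : ℂ) 1, ‖y₂ - x‖ ^ (ε - 2)) := hcalc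
    _ ≤ C * (K + K) := mul_le_mul_of_nonneg_left (add_le_add hle1 hle2) hC0
    _ = (2 / Real.pi) ^ p * (2 * K) * δ ^ (p - ε) := by rw [hC]; ring
    _ ≤ ((2 / Real.pi) ^ p * (2 * K) + 1) * δ ^ (p - ε) :=
        mul_le_mul_of_nonneg_right (by linarith) (Real.rpow_nonneg (norm_nonneg _) _)

/-- Lemma 4.1(a), case `p = (2+a)/2`: for any `ε ∈ (0,(2+a)/2)` there is `c = c(a,ε)` such
that for all `y₁, y₂` on the unit circle,
`∫_{D₀} (1 − |x|)^a·|P₀(x,y₁) − P₀(x,y₂)|^{(2+a)/2} dx ≤ c·|y₁ − y₂|^{(2+a)/2 − ε}`. -/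
theorem integral_abs_poissonKernel_sub_rpow_le_of_eq (a p ε : ℝ) (ha : 0 ≤ a)
    (hpa : p = (2 + a) / 2) (hε : 0 < ε) (hε' : ε < (2 + a) / 2) :
    ∃ c : ℝ, 0 < c ∧ ∀ y₁ y₂ : ℂ, ‖y₁‖ = 1 → ‖y₂‖ = 1 →
      ∫ x in Metric.ball (0 : ℂ) 1,
          (1 - ‖x‖) ^ a * |poissonKernelUnitDisc x y₁ - poissonKernelUnitDisc x y₂| ^ p
        ≤ c * ‖y₁ - y₂‖ ^ ((2 + a) / 2 - ε) := by
  have hp1 : 1 ≤ p := by rw [hpa]; linarith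
  set ε' := min ε (1 / 2) with hε'def
  have hε'0 : 0 < ε' := lt_min hε (by norm_num)
  have hε'1 : ε' < 1 := lt_of_le_of_lt (min_le_right _ _) (by norm_num)
  have hε'half : ε' ≤ 1 / 2 := min_le_right _ _
  have hεε : ε' ≤ ε := min_le_left _ _
  obtain ⟨c, hc, H⟩ := main_aux a p ε' ha hpa hε'0 hε'1
  refine ⟨c * 2 ^ (ε - ε'), mul_pos hc (Real.rpow_pos_of_pos two_pos _), ?_⟩
  intro y₁ y₂ hy₁ hy₂
  have hδ0 : (0:ℝ) ≤ ‖y₁ - y₂‖ := norm_nonneg _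
  have hδ2 : ‖y₁ - y₂‖ ≤ 2 := by
    calc ‖y₁ - y₂‖ ≤ ‖y₁‖ + ‖y₂‖ := norm_sub_le _ _
      _ = 2 := by rw [hy₁, hy₂]; norm_num
  have key : ‖y₁ - y₂‖ ^ (p - ε') ≤ 2 ^ (ε - ε') * ‖y₁ - y₂‖ ^ (p - ε) := by
    have hsplit : p - ε' = (ε - ε') + (p - ε) := by ring
    rw [hsplit, Real.rpow_add' hδ0 (by rw [← hsplit]; intro h; nlinarith)]
    exact mul_le_mul_of_nonneg_right (Real.rpow_le_rpow hδ0 hδ2 (by linarith))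
      (Real.rpow_nonneg hδ0 _)
  rw [show (2 + a) / 2 - ε = p - ε by rw [hpa]]
  calc ∫ x in Metric.ball (0 : ℂ) 1,
      (1 - ‖x‖) ^ a * |poissonKernelUnitDisc x y₁ - poissonKernelUnitDisc x y₂| ^ p
      ≤ c * ‖y₁ - y₂‖ ^ (p - ε') := H y₁ y₂ hy₁ hy₂
    _ ≤ c * (2 ^ (ε - ε') * ‖y₁ - y₂‖ ^ (p - ε)) := mul_le_mul_of_nonneg_left key hc.le
    _ = c * 2 ^ (ε - ε') * ‖y₁ - y₂‖ ^ (p - ε) := by ring
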